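/- Suppose α₀ > α₁ ≥ 1, β₀ > β₁ ≥ 1 are integers with α₁β₀ − β₁α₀ = σ where σ = ±1. Then the sum over j from 0 to β₁ of {α₀ j / β₀} equals (1 − σ + (β₁ + σ)(β₀ − σ)) / (2β₀). -/

import Mathlib

theorem stmt_7 (α₀ α₁ β₀ β₁ : ℕ) (hα₁ : 1 ≤ α₁) (hβ₁ : 1 ≤ β₁)
    (hα : α₁ < α₀) (hβ : β₁ < β₀) (σ : ℤ) (hσ : σ = 1 ∨ σ = -1)
    (h : (α₁ : ℤ) * β₀ - (β₁ : ℤ) * α₀ = σ) :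
    ∑ j ∈ Finset.range (β₁ + 1), Int.fract ((α₀ * j : ℚ) / β₀) =
      (1 - (σ : ℚ) + ((β₁ : ℚ) + σ) * ((β₀ : ℚ) - σ)) / (2 * β₀) := by
  have hβ₀pos : 0 < β₀ := lt_of_le_of_lt (Nat.zero_le _) hβ
  have hβ₀posZ : (0:ℤ) < (β₀:ℤ) := by exact_mod_cast hβ₀pos
  have hβ₀neZ : ((β₀:ℤ)) ≠ 0 := hβ₀posZ.ne'
  have hβ₀neQ : ((β₀:ℚ)) ≠ 0 := by positivity
  have hcop : IsCoprime ((β₀:ℤ)) ((α₀:ℤ)) := by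
    refine ⟨σ * α₁, -σ * β₁, ?_⟩
    rcases hσ with h1 | h1 <;> subst h1 <;> linarith
  -- positivity of residues
  have pos : ∀ j : ℕ, 1 ≤ j → j < β₀ → 0 < ((α₀ * j : ℕ) : ℤ) % β₀ := by
    intro j hj1 hj2
    rcases (Int.emod_nonneg ((α₀ * j : ℕ) : ℤ) hβ₀neZ).lt_or_eq with h' | h'
    · exact h'
    · exfalso
      have hdvd : (β₀:ℤ) ∣ (α₀:ℤ) * (j:ℤ) := by
        have := Int.dvd_of_emod_eq_zero h'.symm
        push_cast at this
        exact this
      have : (β₀:ℤ) ∣ (j:ℤ) := hcop.dvd_of_dvd_mul_left hdvd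
      have := Int.le_of_dvd (by exact_mod_cast hj1) this
      exact absurd (by exact_mod_cast this) (not_le.mpr hj2)
  -- pairing lemma
  have pair : ∀ j : ℕ, 1 ≤ j → j ≤ β₁ - 1 →
      (((α₀ * j : ℕ) : ℤ) % β₀) + (((α₀ * (β₁ - j) : ℕ) : ℤ) % β₀) = β₀ - σ := by
    intro j hj1 hj2
    have hjβ₁ : j ≤ β₁ := le_trans hj2 (Nat.sub_le _ _)
    have hjlt : j < β₀ := lt_of_le_of_lt hjβ₁ hβ
    have hj2' : 1 ≤ β₁ - j := by omega
    have hjlt2 : β₁ - j < β₀ := lt_of_le_of_lt (Nat.sub_le _ _) hβ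
    set a := ((α₀ * j : ℕ) : ℤ) % β₀ with ha
    set b := ((α₀ * (β₁ - j) : ℕ) : ℤ) % β₀ with hb
    have hapos : 0 < a := pos j hj1 hjlt
    have hbpos : 0 < b := pos (β₁ - j) hj2' hjlt2
    have halt : a < β₀ := Int.emod_lt_of_pos _ hβ₀posZ
    have hblt : b < β₀ := Int.emod_lt_of_pos _ hβ₀posZ
    have hakey : a = (α₀:ℤ) * j - β₀ * (((α₀ * j : ℕ) : ℤ) / β₀) := by
      rw [ha, Int.emod_def]; push_cast; ring
    have hbkey : b = (α₀:ℤ) * ((β₁:ℤ) - j) - β₀ * (((α₀ * (β₁ - j) : ℕ) : ℤ) / β₀) := by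
      rw [hb, Int.emod_def]
      push_cast [Nat.cast_sub hjβ₁]
      ring
    set q1 := (((α₀ * j : ℕ) : ℤ) / β₀) with hq1
    set q2 := (((α₀ * (β₁ - j) : ℕ) : ℤ) / β₀) with hq2
    have hsum : a + b + σ = (β₀:ℤ) * ((α₁:ℤ) - q1 - q2) := by
      rw [hakey, hbkey]; linear_combination -h
    have hkpos : (0:ℤ) < (α₁:ℤ) - q1 - q2 := by
      have h1 : (0:ℤ) < (β₀:ℤ) * ((α₁:ℤ) - q1 - q2) := by
        rw [← hsum]
        rcases hσ with h1 | h1 <;> subst h1 <;> linarith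
      nlinarith
    have hklt : (α₁:ℤ) - q1 - q2 < 2 := by
      have h1 : (β₀:ℤ) * ((α₁:ℤ) - q1 - q2) < (β₀:ℤ) * 2 := by
        rw [← hsum]
        rcases hσ with h1 | h1 <;> subst h1 <;> linarith
      exact lt_of_mul_lt_mul_left h1 hβ₀posZ.le
    have hk1 : (α₁:ℤ) - q1 - q2 = 1 := by omega
    rw [hk1, mul_one] at hsum
    linarith
  -- last term
  have hlast : 2 * (((α₀ * β₁ : ℕ) : ℤ) % β₀) = 1 - σ + (1 + σ) * ((β₀:ℤ) - σ) := by
    have hval : ((α₀ * β₁ : ℕ) : ℤ) = -σ + (β₀:ℤ) * α₁ := by push_cast; linarith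
    rw [hval, Int.add_mul_emod_self_left]
    rcases hσ with h1 | h1 <;> subst h1
    · rw [show (-(1:ℤ)) = (β₀ - 1) + β₀ * (-1) by ring, Int.add_mul_emod_self_left,
        Int.emod_eq_of_lt (by linarith) (by linarith)]
      ring
    · rw [show (-(-1:ℤ)) = 1 by ring, Int.emod_eq_of_lt (by norm_num) (by linarith)]
      ring
  -- the integer sum identity
  obtain ⟨n, rfl⟩ : ∃ n, β₁ = n + 1 := ⟨β₁ - 1, by omega⟩
  have key : 2 * ∑ j ∈ Finset.range (n + 1 + 1), (((α₀ * j : ℕ) : ℤ) % β₀)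
      = 1 - σ + (((n:ℤ) + 1) + σ) * ((β₀:ℤ) - σ) := by
    rw [Finset.sum_range_succ, Finset.sum_range_succ']
    have hrefl : ∑ j ∈ Finset.range n, (((α₀ * (j + 1) : ℕ) : ℤ) % β₀)
        = ∑ j ∈ Finset.range n, (((α₀ * (n + 1 - (j + 1)) : ℕ) : ℤ) % β₀) := by
      rw [← Finset.sum_range_reflect (fun j => (((α₀ * (j + 1) : ℕ) : ℤ) % β₀)) n]
      apply Finset.sum_congr rfl
      intro j hj
      simp only [Finset.mem_range] at hj
      have : n - 1 - j + 1 = n + 1 - (j + 1) := by omega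
      rw [this]
    have hpairs : ∑ j ∈ Finset.range n, ((((α₀ * (j + 1) : ℕ) : ℤ) % β₀)
          + (((α₀ * (n + 1 - (j + 1)) : ℕ) : ℤ) % β₀)) = n * ((β₀:ℤ) - σ) := by
      rw [Finset.sum_congr rfl (fun j hj => by
        simp only [Finset.mem_range] at hj
        exact pair (j + 1) (by omega) (by omega))]
      simp [mul_comm]
      ring
    have hsplit : 2 * ∑ j ∈ Finset.range n, (((α₀ * (j + 1) : ℕ) : ℤ) % β₀)
        = n * ((β₀:ℤ) - σ) := by
      rw [two_mul]
      nth_rewrite 2 [hrefl]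
      rw [← Finset.sum_add_distrib]
      exact hpairs
    have h0 : ((α₀ * 0 : ℕ) : ℤ) % β₀ = 0 := by simp
    rw [h0]
    linear_combination hsplit + hlast
  -- convert to rationals
  have hfr : ∀ j ∈ Finset.range (n + 1 + 1),
      Int.fract ((α₀ * j : ℚ) / β₀) = ((α₀ * j % β₀ : ℕ) : ℚ) / β₀ := by
    intro j _
    rw [show ((α₀ : ℚ) * j) = ((α₀ * j : ℕ) : ℚ) by push_cast; ring,
      Int.fract_div_natCast_eq_div_natCast_mod]
  rw [Finset.sum_congr rfl hfr, ← Finset.sum_div]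
  have hb2 : ∀ j ∈ Finset.range (n + 1 + 1),
      ((α₀ * j % β₀ : ℕ) : ℚ) = (((((α₀ * j : ℕ)) : ℤ) % β₀ : ℤ) : ℚ) := by
    intro j _
    norm_cast
  rw [Finset.sum_congr rfl hb2]
  rw [div_eq_div_iff hβ₀neQ (by positivity)]
  have keyQ := congrArg (Int.cast : ℤ → ℚ) key
  push_cast at keyQ ⊢
  linear_combination ((β₀:ℚ)) * keyQ
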